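/- Let s be a global minimizer of f(x) = (1/2)xᵀAx + bᵀx + (ρ/3)‖x‖³, let v₁ be a unit eigenvector of A corresponding to its smallest eigenvalue −γ, and suppose v₁ᵀb ≠ 0. Then ‖s‖ ≥ γ/(2ρ) + sqrt((γ/(2ρ))² + |v₁ᵀb|/ρ). -/

import Mathlib

open scoped RealInnerProductSpace

noncomputable def Am {n : ℕ} (A : Matrix (Fin n) (Fin n) ℝ) :
    EuclideanSpace ℝ (Fin n) →L[ℝ] EuclideanSpace ℝ (Fin n) :=
  Matrix.toEuclideanCLM (𝕜 := ℝ) A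

/-- f(x) = (1/2)xᵀAx + bᵀx + (ρ/3)‖x‖³ -/
noncomputable def cubicF {n : ℕ} (A : Matrix (Fin n) (Fin n) ℝ)
    (b : EuclideanSpace ℝ (Fin n)) (ρ : ℝ) (x : EuclideanSpace ℝ (Fin n)) : ℝ :=
  (1/2) * ⟪x, Am A x⟫ + ⟪b, x⟫ + (ρ/3) * ‖x‖^3

/-- ∇f(x) = Ax + b + ρ‖x‖x -/
noncomputable def gradF {n : ℕ} (A : Matrix (Fin n) (Fin n) ℝ)
    (b : EuclideanSpace ℝ (Fin n)) (ρ : ℝ) (x : EuclideanSpace ℝ (Fin n)) :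
    EuclideanSpace ℝ (Fin n) := Am A x + b + (ρ * ‖x‖) • x

theorem stmt4 {n : ℕ} (A : Matrix (Fin n) (Fin n) ℝ) (hA : A.IsSymm)
    (b : EuclideanSpace ℝ (Fin n)) (ρ : ℝ) (hρ : 0 < ρ)
    (γ : ℝ) (v₁ : EuclideanSpace ℝ (Fin n)) (hv₁ : ‖v₁‖ = 1)
    (hev : Am A v₁ = (-γ) • v₁)
    (hlb : ∀ x : EuclideanSpace ℝ (Fin n), -γ * ‖x‖^2 ≤ ⟪x, Am A x⟫)
    (hb1 : ⟪v₁, b⟫ ≠ 0)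
    (s : EuclideanSpace ℝ (Fin n))
    (hs1 : Am A s + (ρ * ‖s‖) • s + b = 0)
    (hs2 : ρ * ‖s‖ ≥ γ) :
    ‖s‖ ≥ γ/(2*ρ) + Real.sqrt ((γ/(2*ρ))^2 + |⟪v₁, b⟫|/ρ) := by
  -- A is self-adjoint on v₁; pair the stationarity equation with v₁
  have hsym : ⟪v₁, Am A s⟫ = ⟪Am A v₁, s⟫ := by
    have h : A.IsHermitian := by
      rw [Matrix.IsHermitian]; rw [Matrix.IsSymm] at hA
      simpa using hA
    have := (Matrix.isHermitian_iff_isSymmetric.mp h) v₁ s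
    have h2 : ⟪v₁, (Matrix.toEuclideanLin A) s⟫ = ⟪(Matrix.toEuclideanLin A) v₁, s⟫ := by
      simpa [Am, Matrix.coe_toEuclideanCLM_eq_toEuclideanLin] using this.symm
    exact h2
  have hpair : ⟪v₁, Am A s⟫ + (ρ * ‖s‖) * ⟪v₁, s⟫ + ⟪v₁, b⟫ = 0 := by
    have := congrArg (fun y => ⟪v₁, y⟫) hs1
    simpa [inner_add_right, inner_smul_right] using this
  have hkey : (ρ * ‖s‖ - γ) * ⟪v₁, s⟫ = -⟪v₁, b⟫ := by
    have h1 : ⟪v₁, Am A s⟫ = -γ * ⟪v₁, s⟫ := by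
      rw [hsym, hev]; simp [inner_smul_left]
    nlinarith [hpair]
  have hgt : ρ * ‖s‖ - γ > 0 := by
    rcases lt_or_eq_of_le (sub_nonneg.mpr hs2) with h | h
    · exact h
    · exfalso; apply hb1; have := hkey; rw [← h] at this; simpa using this.symm
  set t := ‖s‖ with ht
  have htn : 0 ≤ t := norm_nonneg s
  have hcs : |⟪v₁, s⟫| ≤ t := by
    calc |⟪v₁, s⟫| ≤ ‖v₁‖ * ‖s‖ := abs_real_inner_le_norm v₁ s
    _ = t := by rw [hv₁, one_mul]
  have hineq : |⟪v₁, b⟫| ≤ (ρ * t - γ) * t := by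
    have : |⟪v₁, b⟫| = (ρ * t - γ) * |⟪v₁, s⟫| := by
      rw [← abs_neg, ← hkey, abs_mul, abs_of_pos hgt]
    rw [this]
    exact mul_le_mul_of_nonneg_left hcs hgt.le
  set c := γ / (2 * ρ) with hc
  set q := |⟪v₁, b⟫| / ρ with hq
  have hqpos : 0 < q := div_pos (abs_pos.mpr hb1) hρ
  have h1 : c ^ 2 + q ≤ (t - c) ^ 2 := by
    have : γ = c * (2 * ρ) := by rw [hc, div_mul_cancel₀ γ (by positivity : (2*ρ) ≠ 0)]
    have hq' : |⟪v₁, b⟫| = q * ρ := by rw [hq, div_mul_cancel₀ _ hρ.ne']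
    nlinarith [hineq]
  have htc : 0 ≤ t - c := by
    rcases le_or_gt c 0 with h | h
    · linarith
    · have : γ > 0 := by
        have : c * (2 * ρ) > 0 := mul_pos h (by linarith)
        calc γ = c * (2*ρ) := by rw [hc, div_mul_cancel₀ γ (by positivity : (2*ρ) ≠ 0)]
        _ > 0 := this
      have : ρ * t > γ := by linarith
      have hcρ : 2 * c * ρ = γ := by rw [hc]; field_simp
      nlinarith
  have : Real.sqrt (c ^ 2 + q) ≤ t - c := by
    calc Real.sqrt (c ^ 2 + q) ≤ Real.sqrt ((t - c) ^ 2) := Real.sqrt_le_sqrt h1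
    _ = |t - c| := Real.sqrt_sq_eq_abs _
    _ = t - c := abs_of_nonneg htc
  linarith
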